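/- Let T be a finite set with |T| ≥ k and let P : T × {1,...,k} → ℝ satisfy 0 ≤ P(t,i) for all t, i and P(t,i) ≤ P(t,i+1) for all t and 1 ≤ i < k. Define Υ_H(t) = Σ_{i=1}^k P(t,i)/i and, for an injective map τ : {1,...,k} → T, define A(τ) = Σ_{j=1}^k Σ_{i=j}^k P(τ(j), i)/i. Let τ_H : {1,...,k} → T be an injective map listing k elements with the largest Υ_H-values in nonincreasing order, i.e., Υ_H(τ_H(1)) ≥ Υ_H(τ_H(2)) ≥ ... ≥ Υ_H(τ_H(k)), and Υ_H(τ_H(k)) ≥ Υ_H(t) for every t ∈ T not in the range of τ_H. Then for every injective τ : {1,...,k} → T, A(τ_H) ≥ A(τ)/H_k, where H_k = Σ_{i=1}^k 1/i. -/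

import Mathlib

open Finset

/-- Let `T` be finite with `|T| ≥ k`, and `P : T × {1,…,k} → ℝ` nonnegative and
nondecreasing in the second argument. With `Υ_H(t) = Σ_{i=1}^k P(t,i)/i` and
`A(τ) = Σ_{j=1}^k Σ_{i=j}^k P(τ(j),i)/i` (positions indexed by `a : Fin k`, `j = a+1`),
if `τ_H` lists `k` elements with the largest `Υ_H`-values in nonincreasing order, then for
every injective `τ`, `A(τ_H) ≥ A(τ)/H_k` where `H_k = Σ_{i=1}^k 1/i`. -/
theorem stmt_8 {T : Type*} [Fintype T] [DecidableEq T]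
    (k : ℕ) (hk : 0 < k) (hkT : k ≤ Fintype.card T)
    (P : T → ℕ → ℝ)
    (hP0 : ∀ t, ∀ i ∈ Finset.Icc 1 k, 0 ≤ P t i)
    (hPmono : ∀ t, ∀ i, 1 ≤ i → i < k → P t i ≤ P t (i + 1))
    (τH : Fin k → T) (hτH : Function.Injective τH)
    (hsorted : ∀ a b : Fin k, a ≤ b →
      (∑ i ∈ Finset.Icc 1 k, P (τH b) i / (i : ℝ)) ≤
        ∑ i ∈ Finset.Icc 1 k, P (τH a) i / (i : ℝ))
    (hlast : ∀ t : T, t ∉ Set.range τH →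
      (∑ i ∈ Finset.Icc 1 k, P t i / (i : ℝ)) ≤
        ∑ i ∈ Finset.Icc 1 k, P (τH ⟨k - 1, by omega⟩) i / (i : ℝ))
    (τ : Fin k → T) (hτ : Function.Injective τ) :
    (∑ a : Fin k, ∑ i ∈ Finset.Icc ((a : ℕ) + 1) k, P (τ a) i / (i : ℝ)) /
        (∑ i ∈ Finset.Icc 1 k, (1 : ℝ) / (i : ℝ))
      ≤ ∑ a : Fin k, ∑ i ∈ Finset.Icc ((a : ℕ) + 1) k, P (τH a) i / (i : ℝ) := by
  set Υ : T → ℝ := fun t => ∑ i ∈ Finset.Icc 1 k, P t i / (i : ℝ) with hΥdef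
  set Hk : ℝ := ∑ i ∈ Finset.Icc 1 k, (1 : ℝ) / (i : ℝ) with hHkdef
  -- positivity of Hk
  have hHk : 0 < Hk := by
    apply Finset.sum_pos
    · intro i hi
      have hi1 : 1 ≤ i := (Finset.mem_Icc.mp hi).1
      have : (0:ℝ) < i := by exact_mod_cast hi1
      positivity
    · exact ⟨1, Finset.mem_Icc.mpr ⟨le_refl 1, hk⟩⟩
  -- monotonicity of P extended
  have hmono : ∀ t, ∀ i j : ℕ, 1 ≤ i → i ≤ j → j ≤ k → P t i ≤ P t j := by
    intro t i j h1 hij hjk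
    induction j, hij using Nat.le_induction with
    | base => exact le_refl _
    | succ n hn ih =>
      have h1n : 1 ≤ n := le_trans h1 hn
      have hnk : n < k := by omega
      exact le_trans (ih (by omega)) (hPmono t n h1n hnk)
  have hterm0 : ∀ t, ∀ i ∈ Finset.Icc 1 k, (0:ℝ) ≤ P t i / (i : ℝ) := by
    intro t i hi
    exact div_nonneg (hP0 t i hi) (Nat.cast_nonneg _)
  have hΥ0 : ∀ t, 0 ≤ Υ t := fun t => Finset.sum_nonneg (hterm0 t)
  -- key per-position inequality
  have hkey : ∀ t, ∀ a : ℕ, a ≤ k →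
      Υ t * (∑ i ∈ Finset.Icc (a+1) k, (1:ℝ) / (i:ℝ)) ≤
      (∑ i ∈ Finset.Icc (a+1) k, P t i / (i:ℝ)) * Hk := by
    intro t a hak
    have hsplitΥ : Υ t = (∑ i ∈ Finset.Icc 1 a, P t i / (i:ℝ)) +
        ∑ i ∈ Finset.Icc (a+1) k, P t i / (i:ℝ) := by
      rw [hΥdef]
      simp only [show Finset.Icc 1 k = Finset.Ioc 0 k from Finset.Icc_add_one_left_eq_Ioc 0 k,
        show Finset.Icc 1 a = Finset.Ioc 0 a from Finset.Icc_add_one_left_eq_Ioc 0 a,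
        show Finset.Icc (a+1) k = Finset.Ioc a k from Finset.Icc_add_one_left_eq_Ioc a k]
      exact (Finset.sum_Ioc_consecutive _ (Nat.zero_le a) hak).symm
    have hsplitH : Hk = (∑ i ∈ Finset.Icc 1 a, (1:ℝ) / (i:ℝ)) +
        ∑ i ∈ Finset.Icc (a+1) k, (1:ℝ) / (i:ℝ) := by
      rw [hHkdef]
      simp only [show Finset.Icc 1 k = Finset.Ioc 0 k from Finset.Icc_add_one_left_eq_Ioc 0 k,
        show Finset.Icc 1 a = Finset.Ioc 0 a from Finset.Icc_add_one_left_eq_Ioc 0 a,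
        show Finset.Icc (a+1) k = Finset.Ioc a k from Finset.Icc_add_one_left_eq_Ioc a k]
      exact (Finset.sum_Ioc_consecutive _ (Nat.zero_le a) hak).symm
    have hcross : (∑ i ∈ Finset.Icc 1 a, P t i / (i:ℝ)) *
          (∑ i ∈ Finset.Icc (a+1) k, (1:ℝ) / (i:ℝ)) ≤
        (∑ i ∈ Finset.Icc (a+1) k, P t i / (i:ℝ)) *
          (∑ i ∈ Finset.Icc 1 a, (1:ℝ) / (i:ℝ)) := by
      rw [Finset.sum_mul_sum, Finset.sum_mul_sum, Finset.sum_comm]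
      apply Finset.sum_le_sum
      intro i hi
      apply Finset.sum_le_sum
      intro i' hi'
      obtain ⟨hi'1, hi'a⟩ := Finset.mem_Icc.mp hi'
      obtain ⟨hia, hik⟩ := Finset.mem_Icc.mp hi
      have hP : P t i' ≤ P t i := hmono t i' i hi'1 (by omega) hik
      have hi'pos : (0:ℝ) < (i':ℝ) := by exact_mod_cast hi'1
      have hipos : (0:ℝ) < (i:ℝ) := by exact_mod_cast (show 1 ≤ i by omega)
      calc P t i' / (i':ℝ) * ((1:ℝ) / (i:ℝ))
          = P t i' * (((i':ℝ))⁻¹ * ((i:ℝ))⁻¹) := by ring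
        _ ≤ P t i * (((i':ℝ))⁻¹ * ((i:ℝ))⁻¹) := by
            apply mul_le_mul_of_nonneg_right hP
            positivity
        _ = P t i / (i:ℝ) * ((1:ℝ) / (i':ℝ)) := by ring
    calc Υ t * (∑ i ∈ Finset.Icc (a+1) k, (1:ℝ) / (i:ℝ))
        = (∑ i ∈ Finset.Icc 1 a, P t i / (i:ℝ)) *
            (∑ i ∈ Finset.Icc (a+1) k, (1:ℝ) / (i:ℝ)) +
          (∑ i ∈ Finset.Icc (a+1) k, P t i / (i:ℝ)) *
            (∑ i ∈ Finset.Icc (a+1) k, (1:ℝ) / (i:ℝ)) := by rw [hsplitΥ]; ring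
      _ ≤ (∑ i ∈ Finset.Icc (a+1) k, P t i / (i:ℝ)) *
            (∑ i ∈ Finset.Icc 1 a, (1:ℝ) / (i:ℝ)) +
          (∑ i ∈ Finset.Icc (a+1) k, P t i / (i:ℝ)) *
            (∑ i ∈ Finset.Icc (a+1) k, (1:ℝ) / (i:ℝ)) := by
            exact add_le_add_left hcross _
      _ = (∑ i ∈ Finset.Icc (a+1) k, P t i / (i:ℝ)) * Hk := by rw [hsplitH]; ring
  -- sum of tail-harmonic weights equals k
  have hswap : (∑ a : Fin k, ∑ i ∈ Finset.Icc ((a:ℕ)+1) k, (1:ℝ) / (i:ℝ)) = (k:ℝ) := by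
    rw [Fin.sum_univ_eq_sum_range (fun a => ∑ i ∈ Finset.Icc (a+1) k, (1:ℝ) / (i:ℝ))]
    have hfil : ∀ a : ℕ, Finset.Icc (a+1) k =
        (Finset.Icc 1 k).filter (fun i => a + 1 ≤ i) := by
      intro a; ext i; simp only [Finset.mem_Icc, Finset.mem_filter]; omega
    calc ∑ a ∈ Finset.range k, ∑ i ∈ Finset.Icc (a+1) k, (1:ℝ) / (i:ℝ)
        = ∑ a ∈ Finset.range k, ∑ i ∈ Finset.Icc 1 k,
            (if a + 1 ≤ i then (1:ℝ) / (i:ℝ) else 0) := by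
          refine Finset.sum_congr rfl fun a _ => ?_
          rw [hfil a, Finset.sum_filter]
      _ = ∑ i ∈ Finset.Icc 1 k, ∑ a ∈ Finset.range k,
            (if a + 1 ≤ i then (1:ℝ) / (i:ℝ) else 0) := Finset.sum_comm
      _ = ∑ i ∈ Finset.Icc 1 k, (1:ℝ) := by
          refine Finset.sum_congr rfl fun i hi => ?_
          obtain ⟨hi1, hik⟩ := Finset.mem_Icc.mp hi
          have hfil2 : (Finset.range k).filter (fun a => a + 1 ≤ i) = Finset.range i := by
            ext a; simp only [Finset.mem_filter, Finset.mem_range]; omega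
          rw [← Finset.sum_filter, hfil2, Finset.sum_const, Finset.card_range,
            nsmul_eq_mul]
          have : (i:ℝ) ≠ 0 := by exact_mod_cast (by omega : i ≠ 0)
          field_simp
      _ = (k:ℝ) := by rw [Finset.sum_const, Nat.card_Icc, nsmul_eq_mul, mul_one]; norm_num
  -- selection: sum of Υ over τ range is at most over τH range
  have hsel : (∑ a : Fin k, Υ (τ a)) ≤ ∑ a : Fin k, Υ (τH a) := by
    set Sτ : Finset T := Finset.univ.image τ with hSτ
    set SH : Finset T := Finset.univ.image τH with hSH
    have h1 : (∑ a : Fin k, Υ (τ a)) = ∑ t ∈ Sτ, Υ t :=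
      (Finset.sum_image (fun x _ y _ h => hτ h)).symm
    have h2 : (∑ a : Fin k, Υ (τH a)) = ∑ t ∈ SH, Υ t :=
      (Finset.sum_image (fun x _ y _ h => hτH h)).symm
    rw [h1, h2]
    set m : ℝ := Υ (τH ⟨k - 1, by omega⟩) with hm
    have hupper : ∀ t ∈ Sτ \ SH, Υ t ≤ m := by
      intro t ht
      obtain ⟨-, htn⟩ := Finset.mem_sdiff.mp ht
      apply hlast
      intro ⟨a, ha⟩
      exact htn (Finset.mem_image.mpr ⟨a, Finset.mem_univ a, ha⟩)
    have hlower : ∀ t ∈ SH \ Sτ, m ≤ Υ t := by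
      intro t ht
      obtain ⟨htm, -⟩ := Finset.mem_sdiff.mp ht
      obtain ⟨a, -, ha⟩ := Finset.mem_image.mp htm
      subst ha
      exact hsorted a ⟨k - 1, by omega⟩ (by
        rw [Fin.le_def]; exact Nat.le_sub_one_of_lt a.isLt)
    have hcard : (Sτ \ SH).card = (SH \ Sτ).card := by
      have c1 : Sτ.card = k := by
        rw [hSτ, Finset.card_image_of_injective _ hτ, Finset.card_univ, Fintype.card_fin]
      have c2 : SH.card = k := by
        rw [hSH, Finset.card_image_of_injective _ hτH, Finset.card_univ, Fintype.card_fin]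
      have d1 := Finset.card_sdiff_add_card_inter Sτ SH
      have d2 := Finset.card_sdiff_add_card_inter SH Sτ
      rw [Finset.inter_comm] at d2
      omega
    have hsplit1 : (∑ t ∈ Sτ, Υ t) = (∑ t ∈ Sτ \ SH, Υ t) + ∑ t ∈ Sτ ∩ SH, Υ t := by
      rw [add_comm, Finset.sum_inter_add_sum_sdiff]
    have hsplit2 : (∑ t ∈ SH, Υ t) = (∑ t ∈ SH \ Sτ, Υ t) + ∑ t ∈ Sτ ∩ SH, Υ t := by
      rw [add_comm, Finset.inter_comm, Finset.sum_inter_add_sum_sdiff]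
    rw [hsplit1, hsplit2]
    apply add_le_add_left
    calc (∑ t ∈ Sτ \ SH, Υ t) ≤ (Sτ \ SH).card • m := Finset.sum_le_card_nsmul _ _ _ hupper
      _ = (SH \ Sτ).card • m := by rw [hcard]
      _ ≤ ∑ t ∈ SH \ Sτ, Υ t := Finset.card_nsmul_le_sum _ _ _ hlower
  -- Chebyshev
  have hmv : MonovaryOn (fun a : Fin k => Υ (τH a))
      (fun a : Fin k => ∑ i ∈ Finset.Icc ((a:ℕ)+1) k, (1:ℝ) / (i:ℝ)) ↑(Finset.univ : Finset (Fin k)) := by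
    intro i _ j _ hij
    rcases le_total i j with h | h
    · exfalso
      have : (∑ x ∈ Finset.Icc ((j:ℕ)+1) k, (1:ℝ) / (x:ℝ)) ≤
          ∑ x ∈ Finset.Icc ((i:ℕ)+1) k, (1:ℝ) / (x:ℝ) := by
        apply Finset.sum_le_sum_of_subset_of_nonneg
        · exact Finset.Icc_subset_Icc_left (Nat.add_le_add_right h 1)
        · intro x hx _
          have hx1 : 1 ≤ x := by
            have := (Finset.mem_Icc.mp hx).1; omega
          have : (0:ℝ) < (x:ℝ) := by exact_mod_cast hx1
          positivity
      linarith
    · exact hsorted j i h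
  have hcheb := hmv.sum_mul_sum_le_card_mul_sum
  rw [Finset.card_univ, Fintype.card_fin, hswap] at hcheb
  have hkpos : (0:ℝ) < (k:ℝ) := by exact_mod_cast hk
  rw [mul_comm] at hcheb
  have hS_le : (∑ a : Fin k, Υ (τH a)) ≤
      ∑ a : Fin k, Υ (τH a) * (∑ i ∈ Finset.Icc ((a:ℕ)+1) k, (1:ℝ) / (i:ℝ)) :=
    le_of_mul_le_mul_left hcheb hkpos
  have hsum_key : (∑ a : Fin k, Υ (τH a) * (∑ i ∈ Finset.Icc ((a:ℕ)+1) k, (1:ℝ) / (i:ℝ))) ≤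
      (∑ a : Fin k, ∑ i ∈ Finset.Icc ((a:ℕ)+1) k, P (τH a) i / (i:ℝ)) * Hk := by
    rw [Finset.sum_mul]
    exact Finset.sum_le_sum fun a _ => hkey (τH a) (a:ℕ) a.isLt.le
  have hA_le : (∑ a : Fin k, ∑ i ∈ Finset.Icc ((a:ℕ)+1) k, P (τ a) i / (i:ℝ)) ≤
      ∑ a : Fin k, Υ (τ a) := by
    apply Finset.sum_le_sum
    intro a _
    apply Finset.sum_le_sum_of_subset_of_nonneg
    · exact Finset.Icc_subset_Icc_left (by omega)
    · exact fun i hi _ => hterm0 (τ a) i hi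
  rw [div_le_iff₀ hHk]
  calc (∑ a : Fin k, ∑ i ∈ Finset.Icc ((a:ℕ)+1) k, P (τ a) i / (i:ℝ))
      ≤ ∑ a : Fin k, Υ (τ a) := hA_le
    _ ≤ ∑ a : Fin k, Υ (τH a) := hsel
    _ ≤ ∑ a : Fin k, Υ (τH a) * (∑ i ∈ Finset.Icc ((a:ℕ)+1) k, (1:ℝ) / (i:ℝ)) := hS_le
    _ ≤ (∑ a : Fin k, ∑ i ∈ Finset.Icc ((a:ℕ)+1) k, P (τH a) i / (i:ℝ)) * Hk := hsum_key
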